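/- Let d be a k-graphical sequence, K a (k−1)-set and a, b ∉ K distinct, with P_{K+a}(d − e_{K+a}) < 1 and d − e_{K+a} k-graphical. Define Y_{a,K,b}(d) = N_{a+K, K+b}(d)/N(d). Then Y_{a,K,b}(d) = [P_{K+a}(d)/(1 − P_{K+a}(d − e_{K+a}))]·(P_{K+b}(d − e_{K+a}) − Y_{a,K,b}(d − e_{K+a})). -/

import Mathlib

open Finset

/-- The degree sequence of a hypergraph `H` on vertex set `Fin n`. -/
def degSeq {n : ℕ} (H : Finset (Finset (Fin n))) : Fin n → ℤ :=
  fun v => (H.filter (fun e => v ∈ e)).card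

/-- The number of `k`-uniform hypergraphs on `[n]` with degree sequence `d`. -/
noncomputable def Ncount (n k : ℕ) (d : Fin n → ℤ) : ℕ :=
  {H : Finset (Finset (Fin n)) | (∀ e ∈ H, e.card = k) ∧ degSeq H = d}.ncard

/-- The number of such hypergraphs containing the edge `S`. -/
noncomputable def NcountE (n k : ℕ) (S : Finset (Fin n)) (d : Fin n → ℤ) : ℕ :=
  {H : Finset (Finset (Fin n)) | (∀ e ∈ H, e.card = k) ∧ degSeq H = d ∧ S ∈ H}.ncard

/-- The number of such hypergraphs containing both edges `S` and `T`. -/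
noncomputable def NcountEE (n k : ℕ) (S T : Finset (Fin n)) (d : Fin n → ℤ) : ℕ :=
  {H : Finset (Finset (Fin n)) | (∀ e ∈ H, e.card = k) ∧ degSeq H = d ∧ S ∈ H ∧ T ∈ H}.ncard

/-- `P_S(d)`: edge probability. -/
noncomputable def Pedge (n k : ℕ) (S : Finset (Fin n)) (d : Fin n → ℤ) : ℝ :=
  (NcountE n k S d : ℝ) / (Ncount n k d : ℝ)

/-- `Y_{a,K,b}(d) = N_{a+K,K+b}(d)/N(d)`: the two-edge path probability. -/
noncomputable def Ypath (n k : ℕ) (a : Fin n) (K : Finset (Fin n)) (b : Fin n)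
    (d : Fin n → ℤ) : ℝ :=
  (NcountEE n k (insert a K) (insert b K) d : ℝ) / (Ncount n k d : ℝ)

/-- The indicator vector `e_S` of a vertex set `S`. -/
def indic {n : ℕ} (S : Finset (Fin n)) : Fin n → ℤ := fun v => if v ∈ S then 1 else 0

lemma degSeq_insert {n : ℕ} {H : Finset (Finset (Fin n))} {S : Finset (Fin n)} (hS : S ∉ H) :
    degSeq (insert S H) = degSeq H + indic S := by
  funext v
  simp only [degSeq, indic, Pi.add_apply, Finset.filter_insert]
  by_cases hv : v ∈ S
  · simp only [if_pos hv]
    rw [Finset.card_insert_of_notMem (fun h => hS (Finset.mem_filter.mp h).1)]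
    push_cast; ring
  · rw [if_neg hv]; simp [hv]

lemma key (n k : ℕ) (d : Fin n → ℤ) (S : Finset (Fin n)) (hS : S.card = k)
    (P : Finset (Finset (Fin n)) → Prop)
    (hP : ∀ H, P (insert S H) ↔ P H) :
    {H : Finset (Finset (Fin n)) | (∀ e ∈ H, e.card = k) ∧ degSeq H = d - indic S ∧ P H}.ncard
      = {H : Finset (Finset (Fin n)) | (∀ e ∈ H, e.card = k) ∧ degSeq H = d - indic S ∧ P H ∧ S ∈ H}.ncard
      + {H : Finset (Finset (Fin n)) | (∀ e ∈ H, e.card = k) ∧ degSeq H = d ∧ P H ∧ S ∈ H}.ncard := by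
  classical
  have hsplit : {H : Finset (Finset (Fin n)) | (∀ e ∈ H, e.card = k) ∧ degSeq H = d - indic S ∧ P H}
      = {H : Finset (Finset (Fin n)) | (∀ e ∈ H, e.card = k) ∧ degSeq H = d - indic S ∧ P H ∧ S ∈ H}
        ∪ {H : Finset (Finset (Fin n)) | (∀ e ∈ H, e.card = k) ∧ degSeq H = d - indic S ∧ P H ∧ S ∉ H} := by
    ext H; by_cases hSH : S ∈ H <;> simp [hSH]
  rw [hsplit, Set.ncard_union_eq ?disj (Set.toFinite _) (Set.toFinite _)]
  case disj =>
    rw [Set.disjoint_left]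
    rintro H ⟨-, -, -, h1⟩ ⟨-, -, -, h2⟩
    exact h2 h1
  congr 1
  have himg : (fun H => insert S H) ''
      {H : Finset (Finset (Fin n)) | (∀ e ∈ H, e.card = k) ∧ degSeq H = d - indic S ∧ P H ∧ S ∉ H}
      = {H : Finset (Finset (Fin n)) | (∀ e ∈ H, e.card = k) ∧ degSeq H = d ∧ P H ∧ S ∈ H} := by
    ext H'
    constructor
    · rintro ⟨H, ⟨hk1, hdeg, hPH, hSH⟩, rfl⟩
      refine ⟨?_, ?_, (hP H).mpr hPH, Finset.mem_insert_self _ _⟩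
      · intro e he
        rcases Finset.mem_insert.mp he with rfl | he
        · exact hS
        · exact hk1 e he
      · rw [degSeq_insert hSH, hdeg]; abel
    · rintro ⟨hk1, hdeg, hPH, hSH⟩
      refine ⟨H'.erase S, ⟨?_, ?_, ?_, Finset.notMem_erase _ _⟩, Finset.insert_erase hSH⟩
      · intro e he; exact hk1 e (Finset.mem_of_mem_erase he)
      · have h2 := degSeq_insert (H := H'.erase S) (S := S) (Finset.notMem_erase _ _)
        rw [Finset.insert_erase hSH] at h2
        rw [← hdeg, h2]; abel
      · have := hP (H'.erase S)
        rw [Finset.insert_erase hSH] at this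
        exact this.mp hPH
  rw [← himg]
  rw [Set.ncard_image_of_injOn]
  rintro H1 ⟨-, -, -, h1⟩ H2 ⟨-, -, -, h2⟩ heq
  have := congrArg (fun s => Finset.erase s S) heq
  simpa [Finset.erase_insert h1, Finset.erase_insert h2] using this

/-- the recursion for the path probability `Y_{a,K,b}`. -/
theorem stmt15 (n k : ℕ) (d : Fin n → ℤ) (K : Finset (Fin n)) (a b : Fin n)
    (hK : K.card = k - 1) (ha : a ∉ K) (hb : b ∉ K) (hab : a ≠ b)
    (hgr : 0 < Ncount n k d)
    (hgr' : 0 < Ncount n k (d - indic (insert a K)))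
    (hP : Pedge n k (insert a K) (d - indic (insert a K)) < 1) :
    Ypath n k a K b d
      = Pedge n k (insert a K) d / (1 - Pedge n k (insert a K) (d - indic (insert a K)))
          * (Pedge n k (insert b K) (d - indic (insert a K))
              - Ypath n k a K b (d - indic (insert a K))) := by
  classical
  set S := insert a K with hSdef
  set T := insert b K with hTdef
  set d' := d - indic S with hd'
  by_cases hk0 : k = 0
  · subst hk0
    have hScard : S.card = K.card + 1 := Finset.card_insert_of_notMem ha
    have hempty : ∀ (dd : Fin n → ℤ),
        {H : Finset (Finset (Fin n)) | (∀ e ∈ H, e.card = 0) ∧ degSeq H = dd ∧ S ∈ H} = ∅ := by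
      intro dd
      ext H
      simp only [Set.mem_setOf_eq, Set.mem_empty_iff_false, iff_false]
      rintro ⟨h1, -, h3⟩
      have := h1 S h3
      omega
    have hemptyEE :
        {H : Finset (Finset (Fin n)) | (∀ e ∈ H, e.card = 0) ∧ degSeq H = d ∧ S ∈ H ∧ T ∈ H} = ∅ := by
      ext H
      simp only [Set.mem_setOf_eq, Set.mem_empty_iff_false, iff_false]
      rintro ⟨h1, -, h3, -⟩
      have := h1 S h3
      omega
    have h1 : NcountEE n 0 S T d = 0 := by rw [NcountEE, hemptyEE]; simp
    have h2 : NcountE n 0 S d = 0 := by rw [NcountE, hempty]; simp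
    rw [Ypath, Pedge, ← hSdef, ← hTdef, h1, h2]
    simp
  · have hk1 : 1 ≤ k := Nat.one_le_iff_ne_zero.mpr hk0
    have hScard : S.card = k := by
      rw [hSdef, Finset.card_insert_of_notMem ha, hK]; omega
    have hST : T ≠ S := by
      intro h
      have : b ∈ S := h ▸ Finset.mem_insert_self b K
      rcases Finset.mem_insert.mp this with h' | h'
      · exact hab h'.symm
      · exact hb h'
    have eq1 : Ncount n k d' = NcountE n k S d' + NcountE n k S d := by
      have h := key n k d S hScard (fun _ => True) (fun _ => Iff.rfl)
      simpa [Ncount, NcountE, hd'] using h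
    have eq2 : NcountE n k T d' = NcountEE n k S T d' + NcountEE n k S T d := by
      have h := key n k d S hScard (fun H => T ∈ H)
        (fun H => by simp [Finset.mem_insert, hST])
      have hc1 : {H : Finset (Finset (Fin n)) | (∀ e ∈ H, e.card = k) ∧ degSeq H = d - indic S ∧ T ∈ H ∧ S ∈ H}
          = {H : Finset (Finset (Fin n)) | (∀ e ∈ H, e.card = k) ∧ degSeq H = d - indic S ∧ S ∈ H ∧ T ∈ H} := by
        ext H; simp; tauto
      have hc2 : {H : Finset (Finset (Fin n)) | (∀ e ∈ H, e.card = k) ∧ degSeq H = d ∧ T ∈ H ∧ S ∈ H}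
          = {H : Finset (Finset (Fin n)) | (∀ e ∈ H, e.card = k) ∧ degSeq H = d ∧ S ∈ H ∧ T ∈ H} := by
        ext H; simp; tauto
      rw [hc1, hc2] at h
      simpa [NcountE, NcountEE, hd'] using h
    have hN : (0:ℝ) < (Ncount n k d : ℝ) := by exact_mod_cast hgr
    have hN' : (0:ℝ) < (Ncount n k d' : ℝ) := by exact_mod_cast hgr'
    have hNS'lt : (NcountE n k S d' : ℝ) < (Ncount n k d' : ℝ) := by
      rw [Pedge, div_lt_one hN'] at hP
      exact hP
    have hNS : (NcountE n k S d : ℝ) = (Ncount n k d' : ℝ) - (NcountE n k S d' : ℝ) := by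
      have := congrArg (fun m : ℕ => (m : ℝ)) eq1
      push_cast at this
      linarith
    have hYr : (NcountE n k T d' : ℝ) - (NcountEE n k S T d' : ℝ) = (NcountEE n k S T d : ℝ) := by
      have := congrArg (fun m : ℕ => (m : ℝ)) eq2
      push_cast at this
      linarith
    have hdenom : 1 - Pedge n k S d' ≠ 0 := by
      rw [Pedge]
      have : (NcountE n k S d' : ℝ) / (Ncount n k d' : ℝ) < 1 := by
        rw [div_lt_one hN']; exact hNS'lt
      linarith
    rw [Ypath, Ypath, Pedge, Pedge, Pedge, ← hSdef, ← hTdef]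
    rw [div_sub_div_same, hYr]
    have h1m : 1 - (NcountE n k S d' : ℝ) / (Ncount n k d' : ℝ)
        = ((Ncount n k d' : ℝ) - (NcountE n k S d' : ℝ)) / (Ncount n k d' : ℝ) := by
      field_simp
    rw [h1m, hNS]
    have hpos : (0:ℝ) < (Ncount n k d' : ℝ) - (NcountE n k S d' : ℝ) := by linarith
    field_simp
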